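/- Let a locally compact group $G$ act freely and properly on a topological graph $E = (E^0, E^1, s, r)$, with quotient maps $q^0 : E^0 \to E^0/G$ and $q^1 : E^1 \to E^1/G$. Then the quotient $(E^0/G, E^1/G, \bar s, \bar r)$, with $\bar s, \bar r$ induced by $s, r$, is again a topological graph; in particular, the induced source map $\bar s : E^1/G \to E^0/G$ is a local homeomorphism. -/

import Mathlib

open Filter Topology Set

/-- Key slice lemma: for a free proper action, points of a small neighborhood `V` of `x0`
can only be translated into `V` by group elements close to `1`. -/
lemma slice_lemma {G X : Type*} [Group G] [TopologicalSpace G] [TopologicalSpace X]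
    [MulAction G X]
    (hprop : IsProperMap fun gp : G × X => (gp.1 • gp.2, gp.2))
    (hfree : ∀ (g : G) (x : X), g • x = x → g = 1)
    (x0 : X) {N : Set G} (hN : N ∈ 𝓝 (1 : G)) :
    ∃ V ∈ 𝓝 x0, ∀ x ∈ V, ∀ g : G, g • x ∈ V → g ∈ N := by
  by_contra hcon
  push_neg at hcon
  set h0 : G × X → X × X := fun gp => (gp.1 • gp.2, gp.2) with hh0
  set L : Filter (G × X) := Filter.comap h0 (𝓝 (x0, x0)) ⊓ 𝓟 {p : G × X | p.1 ∉ N} with hL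
  have hLneBot : L.NeBot := by
    rw [hL, inf_principal_neBot_iff]
    intro U hU
    obtain ⟨W, hW, hWU⟩ := Filter.mem_comap.mp hU
    rw [nhds_prod_eq] at hW
    obtain ⟨V1, hV1, V2, hV2, hV12⟩ := Filter.mem_prod_iff.mp hW
    obtain ⟨x, hxV, g, hgxV, hgN⟩ := hcon (V1 ∩ V2) (inter_mem hV1 hV2)
    refine ⟨(g, x), hWU ?_, hgN⟩
    exact hV12 ⟨hgxV.1, hxV.2⟩
  set 𝒰 : Ultrafilter (G × X) := Ultrafilter.of L with h𝒰
  have h𝒰L : (𝒰 : Filter (G × X)) ≤ L := Ultrafilter.of_le L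
  have htend : Tendsto h0 𝒰 (𝓝 (x0, x0)) :=
    tendsto_iff_comap.mpr (h𝒰L.trans inf_le_left)
  obtain ⟨⟨g, x⟩, heq, hle⟩ := (isProperMap_iff_ultrafilter.mp hprop).2 htend
  have hx : x = x0 := congrArg Prod.snd heq
  have hg : g = 1 := by
    apply hfree g x0
    have : g • x = x0 := congrArg Prod.fst heq
    rwa [hx] at this
  subst hx; subst hg
  have hfst : Tendsto (Prod.fst : G × X → G) 𝒰 (𝓝 1) := by
    have : Tendsto (Prod.fst : G × X → G) 𝒰 (𝓝 (1, x).1) :=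
      (continuous_fst.tendsto _).mono_left hle
    simpa using this
  have h1 : {p : G × X | p.1 ∈ N} ∈ 𝒰 := hfst hN
  have h2 : {p : G × X | p.1 ∉ N} ∈ 𝒰 := h𝒰L (le_principal_iff.mp inf_le_right)
  obtain ⟨p, hp1, hp2⟩ := Filter.nonempty_of_mem (Filter.inter_mem h1 h2)
  exact hp2 hp1

/-- If a locally compact group `G` acts freely and properly on a topological
graph `E = (E⁰, E¹, s, r)`, then the quotient `(E⁰/G, E¹/G, s̄, r̄)` is again a topological
graph: the orbit spaces are locally compact Hausdorff, the induced range map `r̄` is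
continuous, and the induced source map `s̄` is a local homeomorphism. -/
theorem stmt4 {G E0 E1 : Type*} [Group G] [TopologicalSpace G]
    [T2Space G] [LocallyCompactSpace G] [IsTopologicalGroup G]
    [TopologicalSpace E0] [TopologicalSpace E1]
    [T2Space E0] [T2Space E1] [LocallyCompactSpace E0] [LocallyCompactSpace E1]
    [MulAction G E0] [MulAction G E1]
    (hc0 : Continuous fun p : G × E0 => p.1 • p.2)
    (hc1 : Continuous fun p : G × E1 => p.1 • p.2)
    (hfree0 : ∀ (g : G) (v : E0), g • v = v → g = 1)
    (hfree1 : ∀ (g : G) (e : E1), g • e = e → g = 1)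
    (hprop0 : IsProperMap fun gp : G × E0 => (gp.1 • gp.2, gp.2))
    (hprop1 : IsProperMap fun gp : G × E1 => (gp.1 • gp.2, gp.2))
    (s r : E1 → E0) (hs : IsLocalHomeomorph s) (hr : Continuous r)
    (hseq : ∀ (g : G) (e : E1), s (g • e) = g • s e)
    (hreq : ∀ (g : G) (e : E1), r (g • e) = g • r e) :
    T2Space (Quotient (MulAction.orbitRel G E0)) ∧
    LocallyCompactSpace (Quotient (MulAction.orbitRel G E0)) ∧
    T2Space (Quotient (MulAction.orbitRel G E1)) ∧
    LocallyCompactSpace (Quotient (MulAction.orbitRel G E1)) ∧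
    (∃ sbar : Quotient (MulAction.orbitRel G E1) → Quotient (MulAction.orbitRel G E0),
      (∀ e : E1, sbar (Quotient.mk (MulAction.orbitRel G E1) e)
          = Quotient.mk (MulAction.orbitRel G E0) (s e)) ∧
      IsLocalHomeomorph sbar) ∧
    (∃ rbar : Quotient (MulAction.orbitRel G E1) → Quotient (MulAction.orbitRel G E0),
      (∀ e : E1, rbar (Quotient.mk (MulAction.orbitRel G E1) e)
          = Quotient.mk (MulAction.orbitRel G E0) (r e)) ∧
      Continuous rbar) := by
  letI : ContinuousSMul G E0 := ⟨hc0⟩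
  letI : ContinuousSMul G E1 := ⟨hc1⟩
  letI : ProperSMul G E0 := ⟨hprop0⟩
  letI : ProperSMul G E1 := ⟨hprop1⟩
  set q0 : E0 → Quotient (MulAction.orbitRel G E0) :=
    Quotient.mk (MulAction.orbitRel G E0) with hq0def
  set q1 : E1 → Quotient (MulAction.orbitRel G E1) :=
    Quotient.mk (MulAction.orbitRel G E1) with hq1def
  have hq0 : IsOpenQuotientMap q0 := MulAction.isOpenQuotientMap_quotientMk
  have hq1 : IsOpenQuotientMap q1 := MulAction.isOpenQuotientMap_quotientMk
  -- descent of s and r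
  have hsdesc : ∀ a b : E1, (MulAction.orbitRel G E1) a b → q0 (s a) = q0 (s b) := by
    intro a b hab
    obtain ⟨g, hg⟩ := MulAction.mem_orbit_iff.mp hab
    refine Quotient.sound (MulAction.mem_orbit_iff.mpr ⟨g, ?_⟩)
    rw [← hseq, hg]
  have hrdesc : ∀ a b : E1, (MulAction.orbitRel G E1) a b → q0 (r a) = q0 (r b) := by
    intro a b hab
    obtain ⟨g, hg⟩ := MulAction.mem_orbit_iff.mp hab
    refine Quotient.sound (MulAction.mem_orbit_iff.mpr ⟨g, ?_⟩)
    rw [← hreq, hg]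
  set sbar : Quotient (MulAction.orbitRel G E1) → Quotient (MulAction.orbitRel G E0) :=
    Quotient.lift (fun e => q0 (s e)) hsdesc with hsbardef
  set rbar : Quotient (MulAction.orbitRel G E1) → Quotient (MulAction.orbitRel G E0) :=
    Quotient.lift (fun e => q0 (r e)) hrdesc with hrbardef
  have hsbar_mk : ∀ e : E1, sbar (q1 e) = q0 (s e) := fun e => rfl
  have hrbar_mk : ∀ e : E1, rbar (q1 e) = q0 (r e) := fun e => rfl
  have hsbar_cont : Continuous sbar := by
    rw [hq1.isQuotientMap.continuous_iff]
    exact hq0.continuous.comp hs.continuous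
  have hrbar_cont : Continuous rbar := by
    rw [hq1.isQuotientMap.continuous_iff]
    exact hq0.continuous.comp hr
  have hsbar_open : IsOpenMap sbar := by
    intro O hO
    have himg : sbar '' O = (q0 ∘ s) '' (q1 ⁻¹' O) := by
      conv_lhs => rw [← Set.image_preimage_eq O hq1.surjective, ← Set.image_comp]
      rfl
    rw [himg, Set.image_comp]
    exact hq0.isOpenMap _ (hs.isOpenMap _ (hO.preimage hq1.continuous))
  refine ⟨t2Space_quotient_mulAction_of_properSMul, hq0.locallyCompactSpace,
    t2Space_quotient_mulAction_of_properSMul, hq1.locallyCompactSpace,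
    ⟨sbar, hsbar_mk, ?_⟩, ⟨rbar, hrbar_mk, hrbar_cont⟩⟩
  -- sbar is a local homeomorphism
  rw [isLocalHomeomorph_iff_isOpenEmbedding_restrict]
  intro p
  obtain ⟨e, rfl⟩ := Quotient.exists_rep p
  obtain ⟨f, hef, hsf⟩ := hs e
  -- find N and Ue such that g ∈ N, e' ∈ Ue implies g • e' ∈ f.source
  have hsmul_ev : ∀ᶠ gp : G × E1 in 𝓝 (1, e), gp.1 • gp.2 ∈ f.source := by
    refine (hc1.tendsto (1, e)).eventually (f.open_source.mem_nhds ?_)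
    simpa using hef
  rw [nhds_prod_eq, Filter.eventually_prod_iff] at hsmul_ev
  obtain ⟨pa, hpa, pb, hpb, hpab⟩ := hsmul_ev
  obtain ⟨V, hV, hVslice⟩ := slice_lemma hprop0 hfree0 (s e) hpa
  -- the neighborhood T of e
  have hTnhds : ({e' | pb e'} ∩ f.source ∩ s ⁻¹' V) ∈ 𝓝 e := by
    refine Filter.inter_mem (Filter.inter_mem hpb (f.open_source.mem_nhds hef)) ?_
    exact hs.continuous.continuousAt.preimage_mem_nhds hV
  set T : Set E1 := interior ({e' | pb e'} ∩ f.source ∩ s ⁻¹' V) with hTdef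
  have heT : e ∈ T := mem_interior_iff_mem_nhds.mpr hTnhds
  have hTsub : T ⊆ {e' | pb e'} ∩ f.source ∩ s ⁻¹' V := interior_subset
  refine ⟨q1 '' T, (hq1.isOpenMap T isOpen_interior).mem_nhds ⟨e, heT, rfl⟩, ?_⟩
  -- the restriction of sbar to q1 '' T is an open embedding
  refine IsOpenEmbedding.of_continuous_injective_isOpenMap
    (hsbar_cont.comp continuous_subtype_val) ?_
    (hsbar_open.restrict (hq1.isOpenMap T isOpen_interior))
  -- injectivity
  rintro ⟨a, ha⟩ ⟨b, hb⟩ hab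
  obtain ⟨e1, he1, rfl⟩ := ha
  obtain ⟨e2, he2, rfl⟩ := hb
  simp only [Set.restrict_apply] at hab
  rw [hsbar_mk, hsbar_mk] at hab
  obtain ⟨g, hg⟩ := MulAction.mem_orbit_iff.mp (Quotient.exact hab)
  -- hg : g • s e2 = s e1
  have hgN : pa g := by
    refine hVslice (s e2) (hTsub he2).2 g ?_
    rw [hg]; exact (hTsub he1).2
  have hgsrc : g • e2 ∈ f.source := hpab hgN (hTsub he2).1.1
  have he1eq : e1 = g • e2 := by
    refine f.injOn ((hTsub he1).1.2) hgsrc ?_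
    rw [← hsf, hseq, hg]
  refine Subtype.ext ?_
  show q1 e1 = q1 e2
  rw [he1eq]
  exact Quotient.sound (MulAction.mem_orbit_iff.mpr ⟨g, rfl⟩)
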